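/- For t ∈ {2,…,T}, the function Q̂ is convex, 𝒳_{t−1} ⊆ int(dom Q̂), and consequently the subdifferential ∂Q̂(y) = {β ∈ ℝⁿ : Q̂(y′) ≥ Q̂(y) + ⟨β, y′ − y⟩ for all y′ ∈ ℝⁿ} is nonempty for every y ∈ 𝒳_{t−1}. -/

import Mathlib

open Matrix Set

noncomputable section

/-- Convexity of an extended-real-valued function, via convexity of its epigraph. -/
def ERealConvex {E : Type*} [AddCommGroup E] [Module ℝ E] (φ : E → EReal) : Prop :=
  Convex ℝ {pz : E × ℝ | φ pz.1 ≤ (pz.2 : EReal)}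

/-- A proper extended-real-valued function: never −∞ and not identically +∞. -/
def ERealProper {E : Type*} (φ : E → EReal) : Prop :=
  (∀ x, φ x ≠ ⊥) ∧ (∃ x, φ x ≠ ⊤)

theorem ereal_exists_subgradient {E : Type*} [NormedAddCommGroup E] [InnerProductSpace ℝ E]
    [FiniteDimensional ℝ E] (φ : E → EReal) (hconv : ERealConvex φ)
    (hbot : ∀ x, φ x ≠ ⊥) {y : E} (hy : y ∈ interior {x | φ x ≠ ⊤}) :
    ∃ β : E, ∀ y', φ y + ((inner ℝ β (y' - y) : ℝ) : EReal) ≤ φ y' := by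
  classical
  set D := {x | φ x ≠ ⊤} with hD
  set q : E → ℝ := fun x => (φ x).toReal with hq
  have hcoe : ∀ x ∈ D, φ x = ((q x : ℝ) : EReal) := fun x hx => (EReal.coe_toReal hx (hbot x)).symm
  -- membership in the epigraph
  have hepi : ∀ x ∈ D, (x, q x) ∈ {pz : E × ℝ | φ pz.1 ≤ (pz.2 : EReal)} := by
    intro x hx; simp only [mem_setOf_eq]; rw [hcoe x hx]
  -- D is convex and q is convex on D
  have hkey : ∀ x₁ ∈ D, ∀ x₂ ∈ D, ∀ a b : ℝ, 0 ≤ a → 0 ≤ b → a + b = 1 →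
      (a • x₁ + b • x₂ ∈ D ∧ q (a • x₁ + b • x₂) ≤ a * q x₁ + b * q x₂) := by
    intro x₁ h₁ x₂ h₂ a b ha hb hab
    have hmem := hconv (hepi x₁ h₁) (hepi x₂ h₂) ha hb hab
    simp only [mem_setOf_eq, Prod.fst_add, Prod.snd_add, Prod.smul_fst, Prod.smul_snd,
      smul_eq_mul] at hmem
    have hD' : a • x₁ + b • x₂ ∈ D := by
      intro htop
      rw [htop] at hmem
      exact absurd hmem (not_le.mpr (EReal.coe_lt_top _))
    refine ⟨hD', ?_⟩
    have := hcoe _ hD'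
    rw [this] at hmem
    exact_mod_cast hmem
  have hDconv : Convex ℝ D := fun x₁ h₁ x₂ h₂ a b ha hb hab => (hkey x₁ h₁ x₂ h₂ a b ha hb hab).1
  have hqconv : ConvexOn ℝ D q :=
    ⟨hDconv, fun x₁ h₁ x₂ h₂ a b ha hb hab => (hkey x₁ h₁ x₂ h₂ a b ha hb hab).2⟩
  set U := interior D with hU
  have hUopen : IsOpen U := isOpen_interior
  have hUconv : Convex ℝ U := hDconv.interior
  have hqcont : ContinuousOn q U := hqconv.continuousOn_interior
  -- the open epigraph over U
  set S : Set (E × ℝ) := {pz : E × ℝ | pz.1 ∈ U ∧ q pz.1 < pz.2} with hS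
  have hSopen : IsOpen S := by
    have h1 : IsOpen (U ×ˢ (univ : Set ℝ)) := hUopen.prod isOpen_univ
    have h2 : ContinuousOn (fun pz : E × ℝ => pz.2 - q pz.1) (U ×ˢ (univ : Set ℝ)) := by
      apply ContinuousOn.sub continuousOn_snd
      exact hqcont.comp continuousOn_fst (fun pz hpz => hpz.1)
    have := h2.isOpen_inter_preimage h1 (isOpen_Ioi (a := (0:ℝ)))
    convert this using 1
    ext pz
    simp only [hS, mem_setOf_eq, mem_inter_iff, mem_prod, mem_univ, and_true, mem_preimage,
      mem_Ioi, sub_pos]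
  have hSconv : Convex ℝ S := by
    intro p₁ h₁ p₂ h₂ a b ha hb hab
    rcases ha.eq_or_lt with rfl | ha'
    · have hb1 : b = 1 := by linarith
      simpa [hb1] using h₂
    rcases hb.eq_or_lt with rfl | hb'
    · have ha1 : a = 1 := by linarith
      simpa [ha1] using h₁
    obtain ⟨h₁U, h₁q⟩ := h₁
    obtain ⟨h₂U, h₂q⟩ := h₂
    constructor
    · simpa using hUconv h₁U h₂U ha hb hab
    · have hc := hqconv.2 (interior_subset h₁U) (interior_subset h₂U) ha hb hab
      calc q ((a • p₁ + b • p₂).1) = q (a • p₁.1 + b • p₂.1) := by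
            simp [Prod.fst_add, Prod.smul_fst]
        _ ≤ a * q p₁.1 + b * q p₂.1 := by simpa [smul_eq_mul] using hc
        _ < a * p₁.2 + b * p₂.2 := by
            apply add_lt_add
            · exact mul_lt_mul_of_pos_left h₁q ha'
            · exact mul_lt_mul_of_pos_left h₂q hb'
        _ = (a • p₁ + b • p₂).2 := by simp [Prod.snd_add, Prod.smul_snd, smul_eq_mul]
  have hynotin : ((y, q y) : E × ℝ) ∉ S := fun h => lt_irrefl _ h.2
  obtain ⟨f, hf⟩ := geometric_hahn_banach_open_point hSconv hSopen hynotin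
  -- decompose f
  set c : ℝ := f (0, 1) with hc
  have hdecomp : ∀ (x : E) (z : ℝ), f (x, z) = f (x, 0) + z * c := by
    intro x z
    have : (x, z) = (x, (0 : ℝ)) + z • ((0 : E), (1 : ℝ)) := by
      simp [Prod.ext_iff]
    rw [this, map_add, _root_.map_smul, smul_eq_mul, hc]
  have hcneg : c < 0 := by
    have hmem : ((y, q y + 1) : E × ℝ) ∈ S := ⟨hy, by show q y < q y + 1; linarith⟩
    have := hf _ hmem
    rw [hdecomp y (q y + 1), hdecomp y (q y)] at this
    nlinarith
  -- the subgradient candidate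
  set L : E →L[ℝ] ℝ := f.comp (ContinuousLinearMap.inl ℝ E ℝ) with hL
  have hLapp : ∀ x : E, L x = f (x, 0) := fun x => rfl
  set β : E := (InnerProductSpace.toDual ℝ E).symm ((-c)⁻¹ • L) with hβ
  have hβapp : ∀ w : E, (inner ℝ β w : ℝ) = (-c)⁻¹ * L w := by
    intro w
    rw [hβ, InnerProductSpace.toDual_symm_apply]
    rfl
  -- subgradient inequality on U
  have hsubU : ∀ y' ∈ U, q y + (inner ℝ β (y' - y) : ℝ) ≤ q y' := by
    intro y' hy'
    have hkey2 : f (y', 0) + q y' * c ≤ f (y, 0) + q y * c := by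
      have h0 : ∀ ε : ℝ, 0 < ε → f (y', 0) + q y' * c ≤ f (y, 0) + q y * c + ε := by
        intro ε hε
        have hmem : ((y', q y' + ε / (-c)) : E × ℝ) ∈ S :=
          ⟨hy', by show q y' < q y' + ε / (-c); have : 0 < ε / (-c) := div_pos hε (by linarith); linarith⟩
        have := hf _ hmem
        rw [hdecomp y' _, hdecomp y (q y)] at this
        have hcne : (-c) ≠ 0 := by linarith
        have : f (y', 0) + (q y' + ε / (-c)) * c < f (y, 0) + q y * c := this
        have hed : ε / (-c) * c = -ε := by have hc0 : c ≠ 0 := ne_of_lt hcneg; field_simp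
        nlinarith
      exact le_of_forall_pos_le_add h0
    have hdiff : L (y' - y) ≤ (q y' - q y) * (-c) := by
      rw [map_sub, hLapp, hLapp]
      nlinarith
    have hinner : (inner ℝ β (y' - y) : ℝ) ≤ q y' - q y := by
      rw [hβapp]
      rw [inv_mul_le_iff₀ (by linarith : (0:ℝ) < -c)]
      linarith [hdiff]
    linarith
  -- extend to all of D by convexity, and to all of E trivially
  refine ⟨β, fun y' => ?_⟩
  by_cases hy' : y' ∈ D
  · have hm : (1/2 : ℝ) • y + (1/2 : ℝ) • y' ∈ U :=
      hDconv.combo_interior_self_mem_interior hy hy' (by norm_num) (by norm_num) (by norm_num)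
    have h1 := hsubU _ hm
    have h2 : q ((1/2 : ℝ) • y + (1/2 : ℝ) • y') ≤ (1/2) * q y + (1/2) * q y' := by
      simpa [smul_eq_mul] using
        hqconv.2 (interior_subset hy) hy'
          (by norm_num : (0:ℝ) ≤ 1/2) (by norm_num : (0:ℝ) ≤ 1/2) (by norm_num)
    have h3 : ((1/2 : ℝ) • y + (1/2 : ℝ) • y') - y = (1/2 : ℝ) • (y' - y) := by
      module
    rw [h3, real_inner_smul_right] at h1
    have hreal : q y + (inner ℝ β (y' - y) : ℝ) ≤ q y' := by linarith
    rw [hcoe y (interior_subset hy), hcoe y' hy', ← EReal.coe_add]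
    exact_mod_cast hreal
  · have : φ y' = ⊤ := not_not.mp hy'
    rw [this]
    exact le_top

set_option maxHeartbeats 1000000 in
/-- a lower approximate value function `Q̂` built from real-valued convex
minorants `f̂ ≤ f_t`, `ĝᵢ ≤ g_{ti}`, `Ŵ ≤ 𝒬_{t+1}` is convex, has `𝒳_{t−1} ⊆ int(dom Q̂)`,
and has a nonempty subdifferential at every point of `𝒳_{t−1}`. -/
theorem stmt_9
    (n p q T : ℕ) (hn : 1 ≤ n) (hp : 1 ≤ p) (hq : 1 ≤ q) (hT : 1 ≤ T)
    (x₀ : EuclideanSpace ℝ (Fin n))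
    (𝒳 : ℕ → Set (EuclideanSpace ℝ (Fin n)))
    (h𝒳₀ : 𝒳 0 = {x₀})
    (h𝒳 : ∀ t, 1 ≤ t → t ≤ T → (𝒳 t).Nonempty ∧ Convex ℝ (𝒳 t) ∧ IsCompact (𝒳 t))
    (f : ℕ → EuclideanSpace ℝ (Fin n) → EuclideanSpace ℝ (Fin n) → EReal)
    (hf : ∀ t, 1 ≤ t → t ≤ T →
      ERealProper (fun z : EuclideanSpace ℝ (Fin n) × EuclideanSpace ℝ (Fin n) => f t z.1 z.2) ∧
      LowerSemicontinuous
        (fun z : EuclideanSpace ℝ (Fin n) × EuclideanSpace ℝ (Fin n) => f t z.1 z.2) ∧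
      ERealConvex
        (fun z : EuclideanSpace ℝ (Fin n) × EuclideanSpace ℝ (Fin n) => f t z.1 z.2) ∧
      (𝒳 t ×ˢ 𝒳 (t - 1)) ⊆ interior {z : EuclideanSpace ℝ (Fin n) × EuclideanSpace ℝ (Fin n) |
        f t z.1 z.2 ≠ ⊤})
    (g : ℕ → Fin p → EuclideanSpace ℝ (Fin n) → EuclideanSpace ℝ (Fin n) → EReal)
    (hg : ∀ t, 1 ≤ t → t ≤ T → ∀ i,
      ERealProper (fun z : EuclideanSpace ℝ (Fin n) × EuclideanSpace ℝ (Fin n) => g t i z.1 z.2) ∧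
      LowerSemicontinuous
        (fun z : EuclideanSpace ℝ (Fin n) × EuclideanSpace ℝ (Fin n) => g t i z.1 z.2) ∧
      ERealConvex
        (fun z : EuclideanSpace ℝ (Fin n) × EuclideanSpace ℝ (Fin n) => g t i z.1 z.2) ∧
      (𝒳 t ×ˢ 𝒳 (t - 1)) ⊆ interior {z : EuclideanSpace ℝ (Fin n) × EuclideanSpace ℝ (Fin n) |
        g t i z.1 z.2 ≠ ⊤})
    (A B : ℕ → Matrix (Fin q) (Fin n) ℝ) (b : ℕ → Fin q → ℝ)
    (X : ℕ → EuclideanSpace ℝ (Fin n) → Set (EuclideanSpace ℝ (Fin n)))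
    (hX : ∀ t y, X t y =
      {x ∈ 𝒳 t | (∀ i, g t i x y ≤ 0) ∧ (A t).mulVec x + (B t).mulVec y = b t})
    -- Assumption (H1)
    (hH1a : (X 1 x₀).Nonempty)
    (hH1b : ∀ t, 2 ≤ t → t ≤ T →
      𝒳 (t - 1) ⊆ interior {y | (X t y ∩ intrinsicInterior ℝ (𝒳 t)).Nonempty})
    -- the cost-to-go functions
    (Q : ℕ → EuclideanSpace ℝ (Fin n) → EReal)
    (hQT : ∀ y, Q (T + 1) y = 0)
    (hQ : ∀ t, 1 ≤ t → t ≤ T → ∀ y,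
      Q t y = sInf ((fun x => f t x y + Q (t + 1) x) '' X t y))
    -- fixed stage t and real-valued convex minorants
    (t : ℕ) (ht2 : 2 ≤ t) (htT : t ≤ T)
    (fhat : EuclideanSpace ℝ (Fin n) → EuclideanSpace ℝ (Fin n) → ℝ)
    (hfhatconv : ConvexOn ℝ Set.univ
      (fun z : EuclideanSpace ℝ (Fin n) × EuclideanSpace ℝ (Fin n) => fhat z.1 z.2))
    (hfhatle : ∀ x y, ((fhat x y : ℝ) : EReal) ≤ f t x y)
    (ghat : Fin p → EuclideanSpace ℝ (Fin n) → EuclideanSpace ℝ (Fin n) → ℝ)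
    (hghatconv : ∀ i, ConvexOn ℝ Set.univ
      (fun z : EuclideanSpace ℝ (Fin n) × EuclideanSpace ℝ (Fin n) => ghat i z.1 z.2))
    (hghatle : ∀ i x y, ((ghat i x y : ℝ) : EReal) ≤ g t i x y)
    (What : EuclideanSpace ℝ (Fin n) → ℝ)
    (hWhatconv : ConvexOn ℝ Set.univ What)
    (hWhatle : ∀ x, ((What x : ℝ) : EReal) ≤ Q (t + 1) x)
    -- the approximate value function
    (Qhat : EuclideanSpace ℝ (Fin n) → EReal)
    (hQhat : ∀ y, Qhat y = sInf ((fun x => ((fhat x y + What x : ℝ) : EReal)) ''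
      {x ∈ 𝒳 t | (∀ i, ghat i x y ≤ 0) ∧ (A t).mulVec x + (B t).mulVec y = b t})) :
    ERealConvex Qhat ∧
    𝒳 (t - 1) ⊆ interior {y | Qhat y ≠ ⊤} ∧
    ∀ y ∈ 𝒳 (t - 1), ∃ β : EuclideanSpace ℝ (Fin n),
      ∀ y', Qhat y + ((inner ℝ β (y' - y) : ℝ) : EReal) ≤ Qhat y' := by
  
  classical
  have ht1 : 1 ≤ t := le_trans (by norm_num) ht2
  obtain ⟨h𝒳ne, h𝒳conv, h𝒳cpt⟩ := h𝒳 t ht1 htT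
  set S : EuclideanSpace ℝ (Fin n) → Set (EuclideanSpace ℝ (Fin n)) := fun y =>
    {x ∈ 𝒳 t | (∀ i, ghat i x y ≤ 0) ∧ (A t).mulVec x + (B t).mulVec y = b t} with hSdef
  have hQhat' : ∀ y, Qhat y = sInf ((fun x => ((fhat x y + What x : ℝ) : EReal)) '' S y) :=
    fun y => hQhat y
  -- continuity of the convex data
  have hfc : Continuous (fun z : EuclideanSpace ℝ (Fin n) × EuclideanSpace ℝ (Fin n) =>
      fhat z.1 z.2) := continuousOn_univ.mp (hfhatconv.continuousOn isOpen_univ)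
  have hWc : Continuous What := continuousOn_univ.mp (hWhatconv.continuousOn isOpen_univ)
  have hgc : ∀ i, Continuous (fun z : EuclideanSpace ℝ (Fin n) × EuclideanSpace ℝ (Fin n) =>
      ghat i z.1 z.2) := fun i => continuousOn_univ.mp ((hghatconv i).continuousOn isOpen_univ)
  -- the linear constraint maps
  have hlinA : IsLinearMap ℝ (fun x : EuclideanSpace ℝ (Fin n) => (A t).mulVec x) :=
    ⟨fun u v => Matrix.mulVec_add (A t) u v, fun c v => Matrix.mulVec_smul (A t) c v⟩
  have hlinB : IsLinearMap ℝ (fun x : EuclideanSpace ℝ (Fin n) => (B t).mulVec x) :=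
    ⟨fun u v => Matrix.mulVec_add (B t) u v, fun c v => Matrix.mulVec_smul (B t) c v⟩
  set LA := IsLinearMap.mk' _ hlinA with hLA
  set LB := IsLinearMap.mk' _ hlinB with hLB
  have hAc : Continuous (fun x : EuclideanSpace ℝ (Fin n) => (A t).mulVec x) :=
    LA.continuous_of_finiteDimensional
  -- feasible sets are compact
  have hScl : ∀ y, IsClosed (S y) := by
    intro y
    have hrw : S y = 𝒳 t ∩ ((⋂ i, {x | ghat i x y ≤ 0}) ∩
        {x | (A t).mulVec x + (B t).mulVec y = b t}) := by
      ext x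
      simp only [hSdef, mem_sep_iff, mem_inter_iff, mem_iInter, mem_setOf_eq]
    rw [hrw]
    refine h𝒳cpt.isClosed.inter (IsClosed.inter ?_ ?_)
    · exact isClosed_iInter fun i => isClosed_le
        ((hgc i).comp (continuous_id.prodMk continuous_const)) continuous_const
    · exact isClosed_eq (hAc.add continuous_const) continuous_const
  have hScpt : ∀ y, IsCompact (S y) :=
    fun y => IsCompact.of_isClosed_subset h𝒳cpt (hScl y) (fun x hx => hx.1)
  have hobj : ∀ y, Continuous (fun x => fhat x y + What x) := fun y =>
    (hfc.comp (continuous_id.prodMk continuous_const)).add hWc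
  -- the infimum is attained when the feasible set is nonempty
  have hval : ∀ y, (S y).Nonempty → ∃ x ∈ S y,
      Qhat y = ((fhat x y + What x : ℝ) : EReal) ∧
      ∀ x' ∈ S y, fhat x y + What x ≤ fhat x' y + What x' := by
    intro y hne
    obtain ⟨x, hxS, hxmin⟩ := (hScpt y).exists_isMinOn hne ((hobj y).continuousOn)
    have hmin : ∀ x' ∈ S y, fhat x y + What x ≤ fhat x' y + What x' :=
      fun x' hx' => (isMinOn_iff.mp hxmin) x' hx'
    refine ⟨x, hxS, ?_, hmin⟩
    rw [hQhat']
    apply le_antisymm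
    · exact sInf_le (mem_image_of_mem _ hxS)
    · apply le_sInf
      rintro e ⟨x', hx', rfl⟩
      exact EReal.coe_le_coe_iff.mpr (hmin x' hx')
  have hempty : ∀ y, ¬ (S y).Nonempty → Qhat y = ⊤ := by
    intro y hne
    rw [hQhat', not_nonempty_iff_eq_empty.mp hne]
    simp
  have hbot : ∀ y, Qhat y ≠ ⊥ := by
    intro y
    by_cases hne : (S y).Nonempty
    · obtain ⟨x, -, hxval, -⟩ := hval y hne
      rw [hxval]
      exact EReal.coe_ne_bot _
    · rw [hempty y hne]
      simp
  -- convexity of Qhat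
  have hconvQ : ERealConvex Qhat := by
    rintro ⟨y₁, z₁⟩ hp₁ ⟨y₂, z₂⟩ hp₂ θ μ hθ hμ hθμ
    simp only [mem_setOf_eq] at hp₁ hp₂
    simp only [mem_setOf_eq, Prod.smul_mk, Prod.mk_add_mk, smul_eq_mul]
    have hne₁ : (S y₁).Nonempty := by
      by_contra h
      rw [hempty y₁ h] at hp₁
      exact absurd hp₁ (not_le.mpr (EReal.coe_lt_top _))
    have hne₂ : (S y₂).Nonempty := by
      by_contra h
      rw [hempty y₂ h] at hp₂
      exact absurd hp₂ (not_le.mpr (EReal.coe_lt_top _))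
    obtain ⟨x₁, hx₁S, hx₁v, -⟩ := hval y₁ hne₁
    obtain ⟨x₂, hx₂S, hx₂v, -⟩ := hval y₂ hne₂
    have hv₁ : fhat x₁ y₁ + What x₁ ≤ z₁ := by
      rw [hx₁v] at hp₁; exact_mod_cast hp₁
    have hv₂ : fhat x₂ y₂ + What x₂ ≤ z₂ := by
      rw [hx₂v] at hp₂; exact_mod_cast hp₂
    have hxmem : θ • x₁ + μ • x₂ ∈ 𝒳 t := h𝒳conv hx₁S.1 hx₂S.1 hθ hμ hθμ
    have hgfeas : ∀ i, ghat i (θ • x₁ + μ • x₂) (θ • y₁ + μ • y₂) ≤ 0 := by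
      intro i
      have hc := (hghatconv i).2 (mem_univ (x₁, y₁)) (mem_univ (x₂, y₂)) hθ hμ hθμ
      simp only [Prod.smul_mk, Prod.mk_add_mk, smul_eq_mul] at hc
      have h1 := hx₁S.2.1 i
      have h2 := hx₂S.2.1 i
      nlinarith [hc, h1, h2, hθ, hμ]
    have hlineq : (A t).mulVec (θ • x₁ + μ • x₂) + (B t).mulVec (θ • y₁ + μ • y₂) = b t := by
      show LA (θ • x₁ + μ • x₂) + LB (θ • y₁ + μ • y₂) = b t
      rw [map_add, map_add, _root_.map_smul, _root_.map_smul, _root_.map_smul, _root_.map_smul]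
      have e₁ : LA x₁ + LB y₁ = b t := hx₁S.2.2
      have e₂ : LA x₂ + LB y₂ = b t := hx₂S.2.2
      have key : θ • (LA x₁ + LB y₁) + μ • (LA x₂ + LB y₂) = b t := by
        rw [e₁, e₂, ← add_smul, hθμ, one_smul]
      rw [smul_add, smul_add] at key
      rw [← key]
      abel
    have hfeas : (θ • x₁ + μ • x₂) ∈ S (θ • y₁ + μ • y₂) := ⟨hxmem, hgfeas, hlineq⟩
    have hQle : Qhat (θ • y₁ + μ • y₂) ≤
        ((fhat (θ • x₁ + μ • x₂) (θ • y₁ + μ • y₂) + What (θ • x₁ + μ • x₂) : ℝ) : EReal) := by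
      rw [hQhat']
      exact sInf_le (mem_image_of_mem _ hfeas)
    have hfle : fhat (θ • x₁ + μ • x₂) (θ • y₁ + μ • y₂) ≤ θ * fhat x₁ y₁ + μ * fhat x₂ y₂ := by
      have hc := hfhatconv.2 (mem_univ (x₁, y₁)) (mem_univ (x₂, y₂)) hθ hμ hθμ
      simpa only [Prod.smul_mk, Prod.mk_add_mk, smul_eq_mul] using hc
    have hWle : What (θ • x₁ + μ • x₂) ≤ θ * What x₁ + μ * What x₂ := by
      simpa only [smul_eq_mul] using hWhatconv.2 (mem_univ x₁) (mem_univ x₂) hθ hμ hθμ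
    refine le_trans hQle ?_
    rw [EReal.coe_le_coe_iff]
    have t1 : θ * fhat x₁ y₁ + θ * What x₁ ≤ θ * z₁ := by
      rw [← mul_add]; exact mul_le_mul_of_nonneg_left hv₁ hθ
    have t2 : μ * fhat x₂ y₂ + μ * What x₂ ≤ μ * z₂ := by
      rw [← mul_add]; exact mul_le_mul_of_nonneg_left hv₂ hμ
    linarith [hfle, hWle, t1, t2]
  -- the domain contains 𝒳 (t-1) in its interior
  have hXsub : ∀ y, (X t y ∩ intrinsicInterior ℝ (𝒳 t)).Nonempty → Qhat y ≠ ⊤ := by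
    rintro y ⟨x, hx1, -⟩
    rw [hX] at hx1
    have hxS : x ∈ S y := by
      refine ⟨hx1.1, fun i => ?_, hx1.2.2⟩
      have h := le_trans (hghatle i x y) (hx1.2.1 i)
      exact_mod_cast h
    obtain ⟨x', -, hxval, -⟩ := hval y ⟨x, hxS⟩
    rw [hxval]
    exact EReal.coe_ne_top _
  have hdom : 𝒳 (t - 1) ⊆ interior {y | Qhat y ≠ ⊤} := fun y hy =>
    interior_mono (fun y' hy' => hXsub y' hy') (hH1b t ht2 htT hy)
  exact ⟨hconvQ, hdom, fun y hy => ereal_exists_subgradient Qhat hconvQ hbot (hdom hy)⟩
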